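/- Let h ∈ C[x,y,z] be a homogeneous polynomial of degree e satisfying x·h_y − 2y·h_z = 0. If e = 2e₁ is even, then there exists a homogeneous polynomial h₁ ∈ C[u,v] of degree e₁ such that h = h₁(x^2, xz + y^2); if e = 2e₁ + 1 is odd, then there exists a homogeneous polynomial h₁ ∈ C[u,v] of degree e₁ such that h = x·h₁(x^2, xz + y^2). -/

import Mathlib

open MvPolynomial Finsupp

lemma isHom_iff {σ : Type*} {φ : MvPolynomial σ ℂ} {n : ℕ} :
    φ.IsHomogeneous n ↔ ∀ d : σ →₀ ℕ, coeff d φ ≠ 0 → d.degree = n := by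
  unfold MvPolynomial.IsHomogeneous MvPolynomial.IsWeightedHomogeneous
  simp_rw [Finsupp.degree_eq_weight_one]
  exact Iff.rfl

lemma coeff_pderiv {σ : Type*} [DecidableEq σ] (i : σ) (f : MvPolynomial σ ℂ) (m : σ →₀ ℕ) :
    coeff m (pderiv i f) = (m i + 1 : ℂ) * coeff (m + single i 1) f := by
  induction f using MvPolynomial.induction_on' with
  | monomial s a =>
    rw [pderiv_monomial, coeff_monomial, coeff_monomial]
    split_ifs with h1 h2 h2
    · subst h2
      have hx : ((m + single i 1 : σ →₀ ℕ)) i = m i + 1 := by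
        rw [Finsupp.add_apply, Finsupp.single_eq_same]
      rw [hx]
      push_cast; ring
    · have hsi : s i = 0 := by
        by_contra hs
        apply h2
        rw [← h1]
        ext j
        rcases eq_or_ne j i with rfl | hj
        · simp [Nat.sub_add_cancel (Nat.pos_of_ne_zero hs)]
        · simp [tsub_apply, single_apply, Ne.symm hj]
      simp [hsi]
    · refine absurd ?_ h1
      rw [h2]
      ext j
      rcases eq_or_ne j i with rfl | hj
      · simp
      · simp [tsub_apply, single_apply, Ne.symm hj]
    · simp
  | add p q hp hq => simp [hp, hq, mul_add]

lemma pderiv_comm' {σ : Type*} [DecidableEq σ] (i j : σ) (f : MvPolynomial σ ℂ) :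
    pderiv i (pderiv j f) = pderiv j (pderiv i f) := by
  rcases eq_or_ne i j with rfl | hij
  · rfl
  ext m
  rw [_root_.coeff_pderiv, _root_.coeff_pderiv, _root_.coeff_pderiv, _root_.coeff_pderiv]
  have h1 : ((m + single j 1 : σ →₀ ℕ)) i = m i := by
    rw [Finsupp.add_apply, Finsupp.single_apply, if_neg (Ne.symm hij), add_zero]
  have h2 : ((m + single i 1 : σ →₀ ℕ)) j = m j := by
    rw [Finsupp.add_apply, Finsupp.single_apply, if_neg hij, add_zero]
  rw [h1, h2, add_right_comm]
  ring

lemma mydeg {n : ℕ} (d : Fin n →₀ ℕ) : d.degree = ∑ i, d i := by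
  rw [Finsupp.degree]
  exact Finset.sum_subset (Finset.subset_univ _)
    (fun i _ hi => Finsupp.notMem_support_iff.mp hi)

lemma deg3 (d : Fin 3 →₀ ℕ) : d.degree = d 0 + d 1 + d 2 := by
  rw [mydeg, Fin.sum_univ_three]

lemma deg2 (d : Fin 2 →₀ ℕ) : d.degree = d 0 + d 1 := by
  rw [mydeg, Fin.sum_univ_two]

lemma hom_pderiv {i : Fin 3} {f : MvPolynomial (Fin 3) ℂ} {e : ℕ} (hf : f.IsHomogeneous e) :
    (pderiv i f).IsHomogeneous (e - 1) := by
  rw [isHom_iff] at hf ⊢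
  intro d hd
  rw [_root_.coeff_pderiv] at hd
  have h1 : coeff (d + single i 1) f ≠ 0 := by
    intro h; rw [h, mul_zero] at hd; exact hd rfl
  have h2 := hf _ h1
  rw [deg3] at h2 ⊢
  have e1 : ((d + single i 1 : Fin 3 →₀ ℕ)) 0 + ((d + single i 1 : Fin 3 →₀ ℕ)) 1
      + ((d + single i 1 : Fin 3 →₀ ℕ)) 2 = d 0 + d 1 + d 2 + 1 := by
    simp only [Finsupp.add_apply, Finsupp.single_apply]
    fin_cases i <;> simp <;> ring
  omega

lemma hom_of_X_mul {i : Fin 3} {n : ℕ} {g : MvPolynomial (Fin 3) ℂ}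
    (hg : (X i * g).IsHomogeneous (n + 1)) : g.IsHomogeneous n := by
  rw [isHom_iff] at hg ⊢
  intro d hd
  have := hg (single i 1 + d) (by rw [coeff_X_mul]; exact hd)
  rw [deg3] at this ⊢
  simp only [Finsupp.add_apply, Finsupp.single_apply] at this
  fin_cases i <;> simp at this <;> omega

lemma X_dvd_of_supp {i : Fin 3} {p : MvPolynomial (Fin 3) ℂ}
    (hp : ∀ d : Fin 3 →₀ ℕ, coeff d p ≠ 0 → d i ≠ 0) : X i ∣ p := by
  rw [X_dvd_iff_modMonomial_eq_zero]
  ext d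
  by_cases hle : single i 1 ≤ d
  · rw [coeff_modMonomial_of_le _ hle, coeff_zero]
  · rw [coeff_modMonomial_of_not_le _ hle, coeff_zero]
    by_contra hc
    have := hp d hc
    exact hle (Finsupp.single_le_iff.mpr (by omega))

lemma CX_struct {r : MvPolynomial (Fin 3) ℂ} {e : ℕ} (hr : r.IsHomogeneous e)
    (h1 : pderiv 1 r = 0) (h2 : pderiv 2 r = 0) :
    ∃ c : ℂ, r = C c * X 0 ^ e := by
  have keyvar : ∀ i : Fin 3, pderiv i r = 0 → ∀ d : Fin 3 →₀ ℕ, coeff d r ≠ 0 → d i = 0 := by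
    intro i hi d hd
    by_contra hdi
    have hsum : (d - single i 1) + single i 1 = d := by
      ext j
      rcases eq_or_ne j i with rfl | hj
      · simp only [Finsupp.add_apply, Finsupp.tsub_apply, Finsupp.single_eq_same]
        omega
      · simp [Finsupp.tsub_apply, Finsupp.single_apply, Ne.symm hj, hj]
    have hz : coeff (d - single i 1) (pderiv i r) = 0 := by rw [hi, coeff_zero]
    rw [_root_.coeff_pderiv, hsum] at hz
    rcases mul_eq_zero.mp hz with hc | hc
    · exact Nat.cast_add_one_ne_zero _ hc
    · exact hd hc
  have key : ∀ d : Fin 3 →₀ ℕ, coeff d r ≠ 0 → d = single 0 e := by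
    intro d hd
    have e1 := keyvar 1 h1 d hd
    have e2 := keyvar 2 h2 d hd
    have e0 : d.degree = e := (isHom_iff.mp hr) d hd
    rw [deg3] at e0
    ext j
    fin_cases j <;> simp [Finsupp.single_apply] <;> omega
  refine ⟨coeff (single 0 e) r, ?_⟩
  ext d
  rw [coeff_C_mul, coeff_X_pow]
  rcases eq_or_ne d (single 0 e) with rfl | hd
  · rw [if_pos rfl, mul_one]
  · rw [if_neg (fun hc => hd hc.symm), mul_zero]
    by_contra hc
    exact hd (key d hc)

lemma integrate {p : MvPolynomial (Fin 2) ℂ} {m : ℕ} (hp : p.IsHomogeneous m) :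
    ∃ q : MvPolynomial (Fin 2) ℂ, q.IsHomogeneous (m + 1) ∧ pderiv 1 q = p := by
  refine ⟨∑ d ∈ p.support, monomial (d + single 1 1) (((d 1 : ℂ) + 1)⁻¹ * coeff d p), ?_, ?_⟩
  · rw [isHom_iff]
    intro d hd
    rw [coeff_sum] at hd
    obtain ⟨d', hd', hne⟩ := Finset.exists_ne_zero_of_sum_ne_zero hd
    rw [coeff_monomial] at hne
    rcases eq_or_ne (d' + single 1 1) d with heq | hne2
    · have hdeg := (isHom_iff.mp hp) d' (MvPolynomial.mem_support_iff.mp hd')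
      subst heq
      rw [deg2] at hdeg ⊢
      simp only [Finsupp.add_apply, Finsupp.single_apply]
      norm_num
      omega
    · rw [if_neg hne2] at hne
      exact absurd rfl hne
  · ext dm
    rw [_root_.coeff_pderiv, coeff_sum]
    have hterm : ∀ d ∈ p.support,
        coeff (dm + single 1 1) (monomial (d + single 1 1) (((d 1 : ℂ) + 1)⁻¹ * coeff d p))
        = if d = dm then ((dm 1 : ℂ) + 1)⁻¹ * coeff dm p else 0 := by
      intro d _
      rw [coeff_monomial]
      rcases eq_or_ne d dm with rfl | hne
      · rw [if_pos rfl, if_pos rfl]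
      · rw [if_neg (fun hc => hne (by exact add_right_cancel hc)), if_neg hne]
    rw [Finset.sum_congr rfl hterm, Finset.sum_ite_eq' p.support dm
      (fun _ => ((dm 1 : ℂ) + 1)⁻¹ * coeff dm p)]
    by_cases hmem : dm ∈ p.support
    · rw [if_pos hmem, ← mul_assoc, mul_inv_cancel₀ (Nat.cast_add_one_ne_zero (dm 1)), one_mul]
    · rw [if_neg hmem, mul_zero, (MvPolynomial.mem_support_iff.not_left.mp hmem : coeff dm p = 0)]
open MvPolynomial Finsupp

lemma pd2_aeval (p : MvPolynomial (Fin 2) ℂ) :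
    pderiv 2 (aeval ![X 0 ^ 2, X 0 * X 2 + X 1 ^ 2] p : MvPolynomial (Fin 3) ℂ) =
      X 0 * aeval ![X 0 ^ 2, X 0 * X 2 + X 1 ^ 2] (pderiv 1 p) := by
  induction p using MvPolynomial.induction_on with
  | C a => simp
  | add p q hp hq => simp only [map_add, hp, hq, mul_add]
  | mul_X p i hp =>
    fin_cases i <;>
      simp only [map_mul, aeval_X, Matrix.cons_val_zero, Matrix.cons_val_one, Matrix.head_cons, Fin.mk_zero, Fin.mk_one,
        pderiv_mul, pderiv_pow, pderiv_X_of_ne (show (0:Fin 3) ≠ 2 by decide),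
        pderiv_X_of_ne (show (1:Fin 3) ≠ 2 by decide), pderiv_X_self,
        pderiv_X_of_ne (show (0:Fin 2) ≠ 1 by decide), map_add, map_zero, map_one,
        mul_zero, zero_mul, add_zero, zero_add, mul_one, hp] <;> ring

lemma pd1_aeval (p : MvPolynomial (Fin 2) ℂ) :
    pderiv 1 (aeval ![X 0 ^ 2, X 0 * X 2 + X 1 ^ 2] p : MvPolynomial (Fin 3) ℂ) =
      2 * X 1 * aeval ![X 0 ^ 2, X 0 * X 2 + X 1 ^ 2] (pderiv 1 p) := by
  induction p using MvPolynomial.induction_on with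
  | C a => simp
  | add p q hp hq => simp only [map_add, hp, hq, mul_add]
  | mul_X p i hp =>
    fin_cases i <;>
      simp only [map_mul, aeval_X, Matrix.cons_val_zero, Matrix.cons_val_one, Matrix.head_cons, Fin.mk_zero, Fin.mk_one,
        pderiv_mul, pderiv_pow, pderiv_X_of_ne (show (0:Fin 3) ≠ 1 by decide),
        pderiv_X_of_ne (show (2:Fin 3) ≠ 1 by decide), pderiv_X_self,
        pderiv_X_of_ne (show (0:Fin 2) ≠ 1 by decide), map_add, map_zero, map_one,
        mul_zero, zero_mul, add_zero, zero_add, mul_one, hp] <;> ring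

lemma homA {p : MvPolynomial (Fin 2) ℂ} {n : ℕ} (hp : p.IsHomogeneous n) :
    (aeval ![X 0 ^ 2, X 0 * X 2 + X 1 ^ 2] p : MvPolynomial (Fin 3) ℂ).IsHomogeneous (2 * n) := by
  refine hp.aeval _ (fun i => ?_)
  fin_cases i
  · exact isHomogeneous_X_pow _ _
  · exact ((isHomogeneous_X ℂ (0 : Fin 3)).mul (isHomogeneous_X ℂ 2)).add
      (isHomogeneous_X_pow _ _)
lemma key : ∀ e : ℕ, ∀ h : MvPolynomial (Fin 3) ℂ, h.IsHomogeneous e →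
    X 0 * pderiv 1 h - 2 * X 1 * pderiv 2 h = 0 →
    ∃ h₁ : MvPolynomial (Fin 2) ℂ, h₁.IsHomogeneous (e / 2) ∧
      h = X 0 ^ (e % 2) * aeval ![X 0 ^ 2, X 0 * X 2 + X 1 ^ 2] h₁ := by
  intro e
  induction e using Nat.strong_induction_on with
  | _ e IH =>
  intro h hh heq
  have hC2 : (C 2 : MvPolynomial (Fin 3) ℂ) = 2 := map_ofNat C 2
  have heqs : X 0 * pderiv 1 h = C 2 * (X 1 * pderiv 2 h) := by
    rw [sub_eq_zero.mp heq, hC2]; ring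
  rcases Nat.eq_zero_or_pos e with rfl | he1
  · -- e = 0
    have hc : h = C (coeff 0 h) := by
      ext d
      rcases eq_or_ne d 0 with rfl | hd
      · simp
      · rw [coeff_C, if_neg (Ne.symm hd)]
        by_contra hc
        exact hd (Finsupp.degree_eq_zero_iff d |>.mp (isHom_iff.mp hh d hc))
    exact ⟨C (coeff 0 h), isHomogeneous_C _ _,
      by rw [hc]; simp [aeval_C, algebraMap_eq]⟩
  -- X 0 divides pderiv 2 h
  have hsupp : ∀ d : Fin 3 →₀ ℕ, coeff d (pderiv 2 h) ≠ 0 → d 0 ≠ 0 := by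
    intro d hd hd0
    have hcoeff : coeff (single 1 1 + d) (X 0 * pderiv 1 h)
        = coeff (single 1 1 + d) (C 2 * (X 1 * pderiv 2 h)) := by rw [heqs]
    classical
    rw [coeff_X_mul'] at hcoeff
    have h0 : (0 : Fin 3) ∉ ((single 1 1 + d : Fin 3 →₀ ℕ)).support := by
      rw [Finsupp.notMem_support_iff]
      simp [Finsupp.single_apply, hd0]
    rw [if_neg h0, coeff_C_mul, coeff_X_mul] at hcoeff
    exact hd ((mul_eq_zero.mp hcoeff.symm).resolve_left two_ne_zero)
  obtain ⟨g, hg⟩ : X 0 ∣ pderiv 2 h := X_dvd_of_supp hsupp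
  -- g satisfies the same PDE
  have hDg : X 0 * pderiv 1 g - 2 * X 1 * pderiv 2 g = 0 := by
    have hder := congrArg (pderiv 2) heqs
    simp only [pderiv_mul, pderiv_C_mul,
      pderiv_X_of_ne (show (0:Fin 3) ≠ 2 by decide),
      pderiv_X_of_ne (show (1:Fin 3) ≠ 2 by decide),
      zero_mul, zero_add] at hder
    rw [pderiv_comm' 2 1 h, hg] at hder
    simp only [pderiv_mul, pderiv_C, pderiv_X_of_ne (show (0:Fin 3) ≠ 1 by decide),
      pderiv_X_of_ne (show (0:Fin 3) ≠ 2 by decide), zero_mul, zero_add] at hder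
    have hcancel := mul_left_cancel₀ (X_ne_zero (0 : Fin 3))
      (show X 0 * (X 0 * pderiv 1 g - C 2 * (X 1 * pderiv 2 g)) = X 0 * 0 by
        rw [mul_zero]; linear_combination hder)
    rw [hC2] at hcancel
    linear_combination hcancel
  rcases Nat.lt_or_ge e 2 with he2 | he2
  · -- e = 1
    have he : e = 1 := by omega
    subst he
    have hg0 : g = 0 := by
      by_contra hg0
      obtain ⟨d, hd⟩ := MvPolynomial.ne_zero_iff.mp hg0
      have h1 : coeff (single 0 1 + d) (pderiv 2 h) ≠ 0 := by
        rw [hg, coeff_X_mul]; exact hd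
      have h2 := isHom_iff.mp (hom_pderiv (i := 2) hh) _ h1
      rw [deg3] at h2
      simp only [Finsupp.add_apply, Finsupp.single_apply] at h2
      norm_num at h2
    have hp2 : pderiv 2 h = 0 := by rw [hg, hg0, mul_zero]
    have hp1 : pderiv 1 h = 0 := by
      have hx : X 0 * pderiv 1 h = 0 := by rw [heqs, hp2]; ring
      exact (mul_eq_zero.mp hx).resolve_left (X_ne_zero (0 : Fin 3))
    obtain ⟨c, hc⟩ := CX_struct hh hp1 hp2
    refine ⟨C c, isHomogeneous_C _ _, ?_⟩
    rw [hc, show (1 % 2 : ℕ) = 1 from rfl, aeval_C, algebraMap_eq, pow_one]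
    ring
  -- e ≥ 2
  have hghom : g.IsHomogeneous (e - 2) := by
    apply hom_of_X_mul (i := 0)
    have h2 := hom_pderiv (i := 2) hh
    rw [hg] at h2
    have : e - 2 + 1 = e - 1 := by omega
    rw [this]
    exact h2
  obtain ⟨g₁, hg₁hom, hg₁⟩ := IH (e - 2) (by omega) g hghom hDg
  obtain ⟨q, hqhom, hq⟩ := integrate hg₁hom
  have hmod : (e - 2) % 2 = e % 2 := by omega
  have hdiv : (e - 2) / 2 + 1 = e / 2 := by omega
  have hpowz : ∀ j : Fin 3, j ≠ 0 → pderiv j (X 0 ^ (e % 2) : MvPolynomial (Fin 3) ℂ) = 0 := by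
    intro j hj
    rw [pderiv_pow, pderiv_X_of_ne (Ne.symm hj)]
    ring
  have hp2H : pderiv 2 (X 0 ^ (e % 2) *
      aeval ![X 0 ^ 2, X 0 * X 2 + X 1 ^ 2] q : MvPolynomial (Fin 3) ℂ) = X 0 * g := by
    rw [pderiv_mul, hpowz 2 (by decide), zero_mul, zero_add, pd2_aeval, hq, hg₁, hmod]
    ring
  have hp1H : pderiv 1 (X 0 ^ (e % 2) *
      aeval ![X 0 ^ 2, X 0 * X 2 + X 1 ^ 2] q : MvPolynomial (Fin 3) ℂ) =
      2 * X 1 * (X 0 ^ (e % 2) * aeval ![X 0 ^ 2, X 0 * X 2 + X 1 ^ 2] g₁) := by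
    rw [pderiv_mul, hpowz 1 (by decide), zero_mul, zero_add, pd1_aeval, hq]
    ring
  have hHhom : (X 0 ^ (e % 2) *
      aeval ![X 0 ^ 2, X 0 * X 2 + X 1 ^ 2] q : MvPolynomial (Fin 3) ℂ).IsHomogeneous e := by
    have h1 := homA hqhom
    have h2 := (isHomogeneous_X_pow (R := ℂ) (0 : Fin 3) (e % 2)).mul h1
    have h3 : e % 2 + 2 * ((e - 2) / 2 + 1) = e := by omega
    rwa [h3] at h2
  have hp2r : pderiv 2 (h - X 0 ^ (e % 2) * aeval ![X 0 ^ 2, X 0 * X 2 + X 1 ^ 2] q) = 0 := by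
    rw [map_sub, hg, hp2H, sub_self]
  have hp1r : pderiv 1 (h - X 0 ^ (e % 2) * aeval ![X 0 ^ 2, X 0 * X 2 + X 1 ^ 2] q) = 0 := by
    have hx : X 0 * pderiv 1 (h - X 0 ^ (e % 2) * aeval ![X 0 ^ 2, X 0 * X 2 + X 1 ^ 2] q)
        = 0 := by
      rw [map_sub, mul_sub, heqs, hp1H, hC2, hg, hg₁, hmod]
      ring
    exact (mul_eq_zero.mp hx).resolve_left (X_ne_zero (0 : Fin 3))
  obtain ⟨c, hc⟩ := CX_struct (hh.sub hHhom) hp1r hp2r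
  refine ⟨q + monomial (single 0 (e / 2)) c, ?_, ?_⟩
  · apply IsHomogeneous.add
    · rwa [hdiv] at hqhom
    · exact isHomogeneous_monomial _ (by
        rw [deg2]
        simp [Finsupp.single_apply])
  · have hmon : (aeval ![X 0 ^ 2, X 0 * X 2 + X 1 ^ 2] (monomial (single 0 (e / 2)) c) :
        MvPolynomial (Fin 3) ℂ) = C c * X 0 ^ (2 * (e / 2)) := by
      rw [aeval_monomial, Finsupp.prod_single_index (by rw [pow_zero])]
      simp only [Matrix.cons_val_zero, algebraMap_eq]
      rw [← pow_mul]
    have hfin : h = C c * X 0 ^ e + X 0 ^ (e % 2) *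
        aeval ![X 0 ^ 2, X 0 * X 2 + X 1 ^ 2] q := by rw [← hc]; ring
    rw [hfin, map_add, mul_add, hmon]
    have hpow : (X 0 ^ (e % 2) * X 0 ^ (2 * (e / 2)) : MvPolynomial (Fin 3) ℂ) = X 0 ^ e := by
      rw [← pow_add]
      congr 1
      omega
    rw [← hpow]
    ring

theorem stmt5 (h : MvPolynomial (Fin 3) ℂ) (e : ℕ) (hh : h.IsHomogeneous e)
    (heq : X 0 * pderiv 1 h - 2 * X 1 * pderiv 2 h = 0) :
    (∀ e₁ : ℕ, e = 2 * e₁ →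
      ∃ h₁ : MvPolynomial (Fin 2) ℂ, h₁.IsHomogeneous e₁ ∧
        h = aeval ![X 0 ^ 2, X 0 * X 2 + X 1 ^ 2] h₁) ∧
    (∀ e₁ : ℕ, e = 2 * e₁ + 1 →
      ∃ h₁ : MvPolynomial (Fin 2) ℂ, h₁.IsHomogeneous e₁ ∧
        h = X 0 * aeval ![X 0 ^ 2, X 0 * X 2 + X 1 ^ 2] h₁) := by
  obtain ⟨h₁, hom₁, heq₁⟩ := key e h hh heq
  constructor
  · intro e₁ he
    refine ⟨h₁, by rwa [show e / 2 = e₁ by omega] at hom₁, ?_⟩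
    rw [heq₁, show e % 2 = 0 by omega, pow_zero, one_mul]
  · intro e₁ he
    refine ⟨h₁, by rwa [show e / 2 = e₁ by omega] at hom₁, ?_⟩
    rw [heq₁, show e % 2 = 1 by omega, pow_one]
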